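/- Let f₁, f₂ ∈ 𝔽_q[T] be coprime monic polynomials and let I be a nonzero ideal of 𝒪_E with Norm_{E/𝔽_q(T)}(I) = (f₁f₂). Then there exist unique nonzero ideals I₁ and I₂ of 𝒪_E such that I = I₁I₂, Norm_{E/𝔽_q(T)}(I₁) = (f₁), and Norm_{E/𝔽_q(T)}(I₂) = (f₂). -/

import Mathlib

set_option synthInstance.maxHeartbeats 1000000
set_option maxHeartbeats 1000000

open scoped nonZeroDivisors

theorem stmt11_dvd_norm
    (Fq : Type*) [Field Fq] [Fintype Fq]
    (E : Type*) [Field E] [Algebra (RatFunc Fq) E]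
    [FiniteDimensional (RatFunc Fq) E] [IsGalois (RatFunc Fq) E]
    [Algebra (Polynomial Fq) E] [IsScalarTower (Polynomial Fq) (RatFunc Fq) E]
    [Module.Finite (Polynomial Fq) ↥(integralClosure (Polynomial Fq) E)]
    [Module.Free (Polynomial Fq) ↥(integralClosure (Polynomial Fq) E)]
    (x : ↥(integralClosure (Polynomial Fq) E)) :
    x ∣ algebraMap (Polynomial Fq) ↥(integralClosure (Polynomial Fq) E)
        (Algebra.norm (Polynomial Fq) x) := by
  classical
  haveI : IsLocalization
      (Algebra.algebraMapSubmonoid ↥(integralClosure (Polynomial Fq) E) (Polynomial Fq)⁰) E :=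
    IsIntegralClosure.isLocalization (Polynomial Fq) (RatFunc Fq) E _
  have hloc : Algebra.norm (RatFunc Fq)
        (algebraMap ↥(integralClosure (Polynomial Fq) E) E x)
      = algebraMap (Polynomial Fq) (RatFunc Fq) (Algebra.norm (Polynomial Fq) x) :=
    Algebra.norm_localization (Polynomial Fq) (Polynomial Fq)⁰ x
  have hy : IsIntegral (Polynomial Fq)
      (∏ σ ∈ Finset.univ.erase (AlgEquiv.refl : E ≃ₐ[RatFunc Fq] E), σ (x : E)) :=
    IsIntegral.prod _ fun σ _ => x.2.map (((σ : E ≃ₐ[RatFunc Fq] E).toAlgHom).restrictScalars (Polynomial Fq))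
  refine ⟨⟨_, hy⟩, ?_⟩
  apply Subtype.ext
  show algebraMap (Polynomial Fq) E (Algebra.norm (Polynomial Fq) x)
      = (x : E) * ∏ σ ∈ Finset.univ.erase (AlgEquiv.refl : E ≃ₐ[RatFunc Fq] E), σ (x : E)
  rw [IsScalarTower.algebraMap_apply (Polynomial Fq) (RatFunc Fq) E, ← hloc,
    Algebra.norm_eq_prod_automorphisms,
    ← Finset.mul_prod_erase Finset.univ _ (Finset.mem_univ (AlgEquiv.refl : E ≃ₐ[RatFunc Fq] E))]
  rfl


/- Setup: `Fq` is a finite field (`q` a prime power), `E` is a finite Galois extension of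
the rational function field `Fq(T) = RatFunc Fq`, geometric in the sense that `Fq` is
algebraically closed in `E` (hypothesis `hgeo`), and `integralClosure (Polynomial Fq) E`
is the ring `O_E` of elements of `E` integral over `Fq[T]` (a Dedekind domain, finite and
free as a module over the PID `Fq[T]`).  `Ideal.relNorm (Polynomial Fq)` is the relative
ideal norm from ideals of `O_E` to ideals of `Fq[T]`. -/
/-- Let `f₁, f₂ ∈ Fq[T]` be coprime monic polynomials and `I` a nonzero
ideal of `O_E` with norm `(f₁f₂)`.  Then there is a unique pair of nonzero ideals
`(I₁, I₂)` of `O_E` with `I = I₁I₂`, `Norm I₁ = (f₁)` and `Norm I₂ = (f₂)`. -/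
theorem stmt11
    (Fq : Type*) [Field Fq] [Fintype Fq]
    (E : Type*) [Field E] [Algebra (RatFunc Fq) E]
    [FiniteDimensional (RatFunc Fq) E] [IsGalois (RatFunc Fq) E]
    [Algebra (Polynomial Fq) E] [IsScalarTower (Polynomial Fq) (RatFunc Fq) E]
    [Algebra Fq E] [IsScalarTower Fq (Polynomial Fq) E]
    [IsDedekindDomain ↥(integralClosure (Polynomial Fq) E)]
    [Module.Finite (Polynomial Fq) ↥(integralClosure (Polynomial Fq) E)]
    [Module.Free (Polynomial Fq) ↥(integralClosure (Polynomial Fq) E)]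
    (hgeo : ∀ x : E, IsAlgebraic Fq x → ∃ c : Fq, algebraMap Fq E c = x)
    (f₁ f₂ : Polynomial Fq) (h₁ : f₁.Monic) (h₂ : f₂.Monic) (hcop : IsCoprime f₁ f₂)
    (I : Ideal ↥(integralClosure (Polynomial Fq) E)) (hI : I ≠ ⊥)
    (hnorm : Ideal.relNorm (Polynomial Fq) I = Ideal.span {f₁ * f₂}) :
    ∃! p : Ideal ↥(integralClosure (Polynomial Fq) E) × Ideal ↥(integralClosure (Polynomial Fq) E),
      p.1 ≠ ⊥ ∧ p.2 ≠ ⊥ ∧ I = p.1 * p.2 ∧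
      Ideal.relNorm (Polynomial Fq) p.1 = Ideal.span {f₁} ∧
      Ideal.relNorm (Polynomial Fq) p.2 = Ideal.span {f₂} := by
  classical
  haveI : DecompositionMonoid (Ideal ↥(integralClosure (Polynomial Fq) E)) :=
    UniqueFactorizationMonoid.instDecompositionMonoid
  -- every ideal divides the extension of its norm
  have key : ∀ J : Ideal ↥(integralClosure (Polynomial Fq) E), J ∣ Ideal.map (algebraMap (Polynomial Fq) ↥(integralClosure (Polynomial Fq) E)) (Ideal.relNorm (Polynomial Fq) J) := by
    intro J
    rw [Ideal.dvd_iff_le, Ideal.map_relNorm, Ideal.span_le]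
    rintro _ ⟨x, hx, rfl⟩
    obtain ⟨c, hc⟩ := stmt11_dvd_norm Fq E x
    show algebraMap (Polynomial Fq) ↥(integralClosure (Polynomial Fq) E) (Algebra.intNorm (Polynomial Fq) ↥(integralClosure (Polynomial Fq) E) x) ∈ J
    rw [Algebra.intNorm_eq_norm, hc]
    exact Ideal.mul_mem_right c J hx
  -- coprimality of norms implies coprimality of ideals
  have copN : ∀ P Q : Ideal ↥(integralClosure (Polynomial Fq) E),
      IsCoprime (Ideal.relNorm (Polynomial Fq) P) (Ideal.relNorm (Polynomial Fq) Q) → IsCoprime P Q := by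
    intro P Q h
    rw [Ideal.isCoprime_iff_sup_eq]
    have h1 : Ideal.relNorm (Polynomial Fq) (P ⊔ Q) ∣ Ideal.relNorm (Polynomial Fq) P :=
      map_dvd (Ideal.relNorm (Polynomial Fq)) (Ideal.dvd_iff_le.mpr le_sup_left)
    have h2 : Ideal.relNorm (Polynomial Fq) (P ⊔ Q) ∣ Ideal.relNorm (Polynomial Fq) Q :=
      map_dvd (Ideal.relNorm (Polynomial Fq)) (Ideal.dvd_iff_le.mpr le_sup_right)
    have htop : Ideal.relNorm (Polynomial Fq) (P ⊔ Q) = ⊤ :=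
      Ideal.isUnit_iff.mp (h.isUnit_of_dvd' h1 h2)
    have := Ideal.le_of_dvd (key (P ⊔ Q))
    rw [htop, Ideal.map_top] at this
    exact top_le_iff.mp this
  have hcopI : IsCoprime (Ideal.span {f₁} : Ideal (Polynomial Fq)) (Ideal.span {f₂}) :=
    (Ideal.isCoprime_span_singleton_iff f₁ f₂).mpr hcop
  have hspan1ne : (Ideal.span {f₁} : Ideal (Polynomial Fq)) ≠ 0 := by
    simpa only [Ideal.zero_eq_bot, Ne, Ideal.span_singleton_eq_bot] using h₁.ne_zero
  -- I divides the product of the extended ideals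
  have hIdvd : I ∣ Ideal.span {algebraMap (Polynomial Fq) ↥(integralClosure (Polynomial Fq) E) f₁} * Ideal.span {algebraMap (Polynomial Fq) ↥(integralClosure (Polynomial Fq) E) f₂} := by
    rw [Ideal.span_singleton_mul_span_singleton, ← map_mul]
    have : Ideal.span {algebraMap (Polynomial Fq) ↥(integralClosure (Polynomial Fq) E) (f₁ * f₂)} = Ideal.map (algebraMap (Polynomial Fq) ↥(integralClosure (Polynomial Fq) E)) (Ideal.relNorm (Polynomial Fq) I) := by
      rw [hnorm, Ideal.map_span, Set.image_singleton]
    rw [this]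
    exact key I
  obtain ⟨I₁, I₂, hd₁, hd₂, hI12⟩ := exists_dvd_and_dvd_of_dvd_mul hIdvd
  set n := Fintype.card (Module.Free.ChooseBasisIndex (Polynomial Fq) ↥(integralClosure (Polynomial Fq) E)) with hn
  have hNmap : ∀ f : Polynomial Fq, Ideal.relNorm (Polynomial Fq) (Ideal.span {algebraMap (Polynomial Fq) ↥(integralClosure (Polynomial Fq) E) f})
      = Ideal.span {f} ^ n := by
    intro f
    rw [Ideal.relNorm_singleton, Algebra.intNorm_eq_norm,
      Algebra.norm_algebraMap_of_basis (Module.Free.chooseBasis (Polynomial Fq) ↥(integralClosure (Polynomial Fq) E)),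
      Ideal.span_singleton_pow]
  have hNprod : Ideal.relNorm (Polynomial Fq) I₁ * Ideal.relNorm (Polynomial Fq) I₂
      = Ideal.span {f₁} * Ideal.span {f₂} := by
    rw [← map_mul, ← hI12, hnorm, Ideal.span_singleton_mul_span_singleton]
  have hN1dvd : Ideal.relNorm (Polynomial Fq) I₁ ∣ Ideal.span {f₁} ^ n := by
    have := map_dvd (Ideal.relNorm (Polynomial Fq)) hd₁
    rwa [hNmap] at this
  have hN2dvd : Ideal.relNorm (Polynomial Fq) I₂ ∣ Ideal.span {f₂} ^ n := by
    have := map_dvd (Ideal.relNorm (Polynomial Fq)) hd₂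
    rwa [hNmap] at this
  have hN1 : Ideal.relNorm (Polynomial Fq) I₁ = Ideal.span {f₁} := by
    have c1 : IsCoprime (Ideal.relNorm (Polynomial Fq) I₁) (Ideal.span {f₂} : Ideal (Polynomial Fq)) :=
      (hcopI.pow_left).of_isCoprime_of_dvd_left hN1dvd
    have c2 : IsCoprime (Ideal.span {f₁} : Ideal (Polynomial Fq)) (Ideal.relNorm (Polynomial Fq) I₂) :=
      (hcopI.pow_right).of_isCoprime_of_dvd_right hN2dvd
    have d1 : Ideal.relNorm (Polynomial Fq) I₁ ∣ Ideal.span {f₁} :=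
      c1.dvd_of_dvd_mul_right (hNprod ▸ dvd_mul_right _ _)
    have d2 : (Ideal.span {f₁} : Ideal (Polynomial Fq)) ∣ Ideal.relNorm (Polynomial Fq) I₁ :=
      c2.dvd_of_dvd_mul_right (hNprod ▸ dvd_mul_right _ _)
    exact le_antisymm (Ideal.le_of_dvd d2) (Ideal.le_of_dvd d1)
  have hN2 : Ideal.relNorm (Polynomial Fq) I₂ = Ideal.span {f₂} := by
    refine mul_left_cancel₀ hspan1ne ?_
    rw [← hN1] at hNprod ⊢
    exact hNprod
  have hI₁ne : I₁ ≠ ⊥ := by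
    intro h
    rw [h, Ideal.relNorm_bot] at hN1
    exact hspan1ne hN1.symm
  have hI₂ne : I₂ ≠ ⊥ := by
    intro h
    rw [h, Ideal.relNorm_bot] at hN2
    have : f₂ = 0 := Ideal.span_singleton_eq_bot.mp hN2.symm
    exact h₂.ne_zero this
  refine ⟨(I₁, I₂), ⟨hI₁ne, hI₂ne, hI12, hN1, hN2⟩, ?_⟩
  rintro ⟨J₁, J₂⟩ ⟨hJ₁ne, hJ₂ne, hJ12, hNJ1, hNJ2⟩
  have cop12 : IsCoprime I₁ J₂ := copN _ _ (by rw [hN1, hNJ2]; exact hcopI)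
  have cop21 : IsCoprime J₁ I₂ := copN _ _ (by rw [hNJ1, hN2]; exact hcopI)
  have e1 : I₁ ∣ J₁ :=
    cop12.dvd_of_dvd_mul_right (by rw [← hJ12, hI12]; exact dvd_mul_right _ _)
  have e2 : J₁ ∣ I₁ :=
    cop21.dvd_of_dvd_mul_right (by rw [← hI12, hJ12]; exact dvd_mul_right _ _)
  have h11 : J₁ = I₁ := le_antisymm (Ideal.le_of_dvd e1) (Ideal.le_of_dvd e2)
  have h22 : J₂ = I₂ := by
    refine mul_left_cancel₀ (show I₁ ≠ 0 from hI₁ne) ?_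
    calc I₁ * J₂ = J₁ * J₂ := by rw [h11]
      _ = I := hJ12.symm
      _ = I₁ * I₂ := hI12
  exact Prod.ext h11 h22
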